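/- Let μ be a positive finite Borel measure on ∂T whose co-potential M(α) = μ(∂T_α) satisfies M(α)(1 − I(M^{p′−1})(b(α))) = Σ_{β≥α} M(β)^{p′} for all edges α. Then I(M^{p′−1})(ζ) = 1 for μ-almost every ζ ∈ ∂T. -/

import Mathlib

open scoped ENNReal
open MeasureTheory

/-- A locally finite rooted tree, given by its set of edges. The root edge has no parent,
every other edge has a parent, and every edge has finitely many children. -/
structure RTree where
  E : Type
  root : E
  parent : E → Option E
  parent_root : parent root = none
  parent_isSome : ∀ α, α ≠ root → (parent α).isSome
  level : E → ℕ
  level_root : level root = 0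
  level_parent : ∀ α β, parent α = some β → level α = level β + 1
  locFin : ∀ α, {β | parent β = some α}.Finite

namespace RTree

variable (T : RTree)

/-- `Le T α β` : the edge `α` is an ancestor of (or equal to) the edge `β`,
i.e. `α ≤ β` in the natural partial order on edges. -/
def Le (α β : T.E) : Prop :=
  Relation.ReflTransGen (fun x y => T.parent y = some x) α β

/-- The boundary of `T`: half-infinite geodesics starting at the root edge. -/
structure Boundary where
  seq : ℕ → T.E
  seq_zero : seq 0 = T.root
  seq_parent : ∀ n, T.parent (seq (n + 1)) = some (seq n)

/-- The boundary `∂T_α` of the tent over the edge `α`: boundary points whose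
geodesic passes through `α`. -/
def tentB (α : T.E) : Set T.Boundary := {ζ | ∃ n, ζ.seq n = α}

/-- The standard topology on the boundary, with the tent boundaries as a basis. -/
def ttop : TopologicalSpace T.Boundary :=
  TopologicalSpace.generateFrom {s | ∃ α, s = T.tentB α}

/-- The Borel σ-algebra on the boundary. -/
def tborel : MeasurableSpace T.Boundary := @borel _ T.ttop

/-- The set of edges of the tent `T_α`. -/
def tentE (α : T.E) : Set T.E := {β | T.Le α β}

/-- The relative potential `I_α f (ζ)`, summing `f` over the edges of the geodesic
from the root to `ζ` that lie in the tent `T_α`.  Taking `α` to be the root edge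
gives the potential `If`. -/
noncomputable def relPot (α : T.E) (f : T.E → ℝ≥0∞) (ζ : T.Boundary) : ℝ≥0∞ :=
  ∑' n, Set.indicator (T.tentE α) f (ζ.seq n)

/-- The relative `p`-energy `‖f‖_{ℓ^p(E(T_α))}^p`. -/
noncomputable def relEnergy (p : ℝ) (α : T.E) (f : T.E → ℝ≥0∞) : ℝ≥0∞ :=
  ∑' β, Set.indicator (T.tentE α) (fun γ => f γ ^ p) β

/-- The relative `p`-capacity `c_{p,α}(E)` of `E ⊆ ∂T`, with the tent `T_α`
as ambient tree. -/
noncomputable def relCap (p : ℝ) (α : T.E) (E : Set T.Boundary) : ℝ≥0∞ :=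
  ⨅ f ∈ {f : T.E → ℝ≥0∞ | ∀ ζ ∈ E, 1 ≤ T.relPot α f ζ}, T.relEnergy p α f

/-- The `p`-capacity of a subset of the boundary. -/
noncomputable def cap (p : ℝ) (E : Set T.Boundary) : ℝ≥0∞ := T.relCap p T.root E

end RTree

namespace RTree

variable (T : RTree)

/-- `IM_p(b(α))` : the sum of `M_p = M^{q-1}` over the strict ancestors of the
edge `α`, where `M` is the co-potential of `μ`. -/
noncomputable def belowSum (q : ℝ) (μ : @Measure T.Boundary T.tborel) (α : T.E) : ℝ≥0∞ :=
  ∑' β : T.E, Set.indicator {γ | T.Le γ α ∧ γ ≠ α}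
    (fun γ => μ (T.tentB γ) ^ (q - 1)) β

/-- `μ` is the `p`-equilibrium measure of `E` relative to the tent rooted at `α`
(here `q = p'` is the conjugate exponent of `p`): `μ` is supported on the closure
of `E`, its potential is at least `1` on `E` off a set of zero capacity
(admissibility of `M_p = M^{q-1}`), the energy of `μ` equals the capacity of `E`
(so `M_p` is the capacitary minimizer), and the total mass of `μ` equals the
capacity of `E`. -/
def IsEqMeasure (p q : ℝ) (α : T.E) (E : Set T.Boundary)
    (μ : @Measure T.Boundary T.tborel) : Prop :=
  μ ((@closure _ T.ttop E)ᶜ) = 0 ∧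
  (∃ Z : Set T.Boundary, T.relCap p α Z = 0 ∧
    ∀ ζ ∈ E \ Z, 1 ≤ T.relPot α (fun β => μ (T.tentB β) ^ (q - 1)) ζ) ∧
  T.relEnergy p α (fun β => μ (T.tentB β) ^ (q - 1)) = T.relCap p α E ∧
  μ Set.univ = T.relCap p α E

end RTree

open RTree

namespace RTree

variable {T : RTree}

theorem aux_seq_level (ζ : T.Boundary) : ∀ n, T.level (ζ.seq n) = n := by
  intro n
  induction n with
  | zero => rw [ζ.seq_zero, T.level_root]
  | succ n ih => rw [T.level_parent _ _ (ζ.seq_parent n), ih]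

theorem aux_seq_inj (ζ : T.Boundary) : Function.Injective ζ.seq := by
  intro m n h
  have h1 := aux_seq_level ζ m
  rw [h, aux_seq_level ζ n] at h1
  exact h1.symm

theorem aux_seq_le (ζ : T.Boundary) {k n : ℕ} (h : k ≤ n) :
    T.Le (ζ.seq k) (ζ.seq n) := by
  induction n, h using Nat.le_induction with
  | base => exact Relation.ReflTransGen.refl
  | succ n hk ih => exact ih.tail (ζ.seq_parent n)

theorem aux_root_le_seq (ζ : T.Boundary) (n : ℕ) : T.Le T.root (ζ.seq n) := by
  rw [← ζ.seq_zero]; exact aux_seq_le ζ (Nat.zero_le n)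

theorem aux_le_root {γ : T.E} (h : T.Le γ T.root) : γ = T.root := by
  rcases h.cases_tail with h1 | ⟨c, _, hc⟩
  · exact h1.symm
  · rw [T.parent_root] at hc; cases hc

theorem aux_le_root_cases {β : T.E} (h : T.Le T.root β) :
    β = T.root ∨ ∃ c, T.parent β = some c ∧ T.Le T.root c := by
  rcases h.cases_tail with h1 | ⟨c, h2, hc⟩
  · exact Or.inl h1
  · exact Or.inr ⟨c, hc, h2⟩

theorem aux_le_seq (ζ : T.Boundary) :
    ∀ (m : ℕ) (γ : T.E), T.Le γ (ζ.seq m) → ∃ k, k ≤ m ∧ γ = ζ.seq k := by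
  intro m
  induction m with
  | zero =>
    intro γ h
    rcases h.cases_tail with h1 | ⟨c, _, hc⟩
    · exact ⟨0, le_refl 0, h1.symm⟩
    · rw [ζ.seq_zero, T.parent_root] at hc; cases hc
  | succ m ih =>
    intro γ h
    rcases h.cases_tail with h1 | ⟨c, hγc, hc⟩
    · exact ⟨m + 1, le_refl _, h1.symm⟩
    · have hcs : c = ζ.seq m := Option.some_injective _ (hc.symm.trans (ζ.seq_parent m))
      rcases ih γ (hcs ▸ hγc) with ⟨k, hk, hγ⟩
      exact ⟨k, Nat.le_succ_of_le hk, hγ⟩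

theorem aux_reach_level_finite (T : RTree) :
    ∀ n, {β : T.E | T.Le T.root β ∧ T.level β = n}.Finite := by
  intro n
  induction n with
  | zero =>
    apply Set.Finite.subset (Set.finite_singleton T.root)
    rintro β ⟨h1, h2⟩
    rcases aux_le_root_cases h1 with h | ⟨c, hc, _⟩
    · exact h
    · rw [T.level_parent β c hc] at h2; omega
  | succ n ih =>
    apply Set.Finite.subset (ih.biUnion (fun α _ => T.locFin α))
    rintro β ⟨h1, h2⟩
    rcases aux_le_root_cases h1 with h | ⟨c, hc, hrc⟩
    · rw [h, T.level_root] at h2; omega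
    · have hlc : T.level c = n := by have := T.level_parent β c hc; omega
      exact Set.mem_biUnion ⟨hrc, hlc⟩ hc

theorem aux_reach_countable (T : RTree) : {β : T.E | T.Le T.root β}.Countable := by
  have h : {β : T.E | T.Le T.root β} =
      ⋃ n, {β : T.E | T.Le T.root β ∧ T.level β = n} := by
    ext β
    simp only [Set.mem_iUnion, Set.mem_setOf_eq]
    exact ⟨fun h => ⟨T.level β, h, rfl⟩, fun ⟨n, h, _⟩ => h⟩
  rw [h]
  exact Set.countable_iUnion fun n => (aux_reach_level_finite T n).countable

theorem aux_tentB_measurableSet (α : T.E) : MeasurableSet[T.tborel] (T.tentB α) := by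
  have h : @IsOpen _ T.ttop (T.tentB α) :=
    @TopologicalSpace.isOpen_generateFrom_of_mem _ _ _ ⟨α, rfl⟩
  exact MeasurableSpace.measurableSet_generateFrom h

theorem aux_tentB_root (T : RTree) : T.tentB T.root = Set.univ := by
  ext ζ
  simp only [tentB, Set.mem_setOf_eq, Set.mem_univ, iff_true]
  exact ⟨0, ζ.seq_zero⟩

theorem aux_belowSum_root (T : RTree) (q : ℝ) (μ : @Measure T.Boundary T.tborel) :
    T.belowSum q μ T.root = 0 := by
  have h : {γ : T.E | T.Le γ T.root ∧ γ ≠ T.root} = ∅ := by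
    ext γ
    simp only [Set.mem_setOf_eq, Set.mem_empty_iff_false, iff_false, not_and, not_not]
    exact fun h1 => aux_le_root h1
  simp [belowSum, h]

theorem aux_belowSum_seq (T : RTree) (q : ℝ) (μ : @Measure T.Boundary T.tborel)
    (ζ : T.Boundary) (n : ℕ) :
    T.belowSum q μ (ζ.seq (n + 1)) =
      ∑ k ∈ Finset.range (n + 1), μ (T.tentB (ζ.seq k)) ^ (q - 1) := by
  classical
  have hside : ∀ β ∉ (Finset.range (n + 1)).image ζ.seq,
      Set.indicator {γ : T.E | T.Le γ (ζ.seq (n + 1)) ∧ γ ≠ ζ.seq (n + 1)}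
        (fun γ => μ (T.tentB γ) ^ (q - 1)) β = 0 := by
    intro β hβ
    apply Set.indicator_of_notMem
    rintro ⟨h1, h2⟩
    rcases aux_le_seq ζ (n + 1) β h1 with ⟨k, hk, rfl⟩
    have hk' : k ≠ n + 1 := fun h => h2 (by rw [h])
    exact hβ (Finset.mem_image.mpr ⟨k, Finset.mem_range.mpr (by omega), rfl⟩)
  rw [belowSum, tsum_eq_sum hside,
    Finset.sum_image (fun a _ b _ h => aux_seq_inj ζ h)]
  apply Finset.sum_congr rfl
  intro k hk
  apply Set.indicator_of_mem
  constructor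
  · exact aux_seq_le ζ (Nat.le_of_lt (Finset.mem_range.mp hk))
  · intro h
    have e2 : k = n + 1 := aux_seq_inj ζ h
    have e3 : k < n + 1 := Finset.mem_range.mp hk
    omega

theorem aux_key (T : RTree) (q : ℝ) (hq : 1 < q) (μ : @Measure T.Boundary T.tborel)
    (hfin : @IsFiniteMeasure _ T.tborel μ)
    (heq : ∀ α : T.E, μ (T.tentB α) * (1 - T.belowSum q μ α) =
      ∑' β : T.E, Set.indicator (T.tentE α) (fun γ => μ (T.tentB γ) ^ q) β)
    (α : T.E) (hα : μ (T.tentB α) ≠ 0) :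
    T.belowSum q μ α + μ (T.tentB α) ^ (q - 1) ≤ 1 := by
  haveI := hfin
  have hMt : μ (T.tentB α) ≠ ⊤ := measure_ne_top μ _
  have h1 : μ (T.tentB α) ^ q ≤
      ∑' β : T.E, Set.indicator (T.tentE α) (fun γ => μ (T.tentB γ) ^ q) β := by
    have h := ENNReal.le_tsum (f := fun β : T.E =>
      Set.indicator (T.tentE α) (fun γ => μ (T.tentB γ) ^ q) β) α
    rwa [Set.indicator_of_mem (show α ∈ T.tentE α from Relation.ReflTransGen.refl)] at h
  rw [← heq α] at h1
  have e1 : (1 : ℝ) + (q - 1) = q := by ring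
  have hq1 : μ (T.tentB α) ^ q = μ (T.tentB α) * μ (T.tentB α) ^ (q - 1) := by
    conv_lhs => rw [← e1]
    rw [ENNReal.rpow_add 1 (q - 1) hα hMt, ENNReal.rpow_one]
  rw [hq1] at h1
  have h2 : μ (T.tentB α) ^ (q - 1) ≤ 1 - T.belowSum q μ α :=
    (ENNReal.mul_le_mul_iff_right hα hMt).mp h1
  have hb : T.belowSum q μ α ≤ 1 := by
    by_contra hcon
    have hz : (1 : ℝ≥0∞) - T.belowSum q μ α = 0 :=
      tsub_eq_zero_of_le (le_of_lt (not_le.mp hcon))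
    rw [hz] at h2
    rcases ENNReal.rpow_eq_zero_iff.mp (le_antisymm h2 zero_le) with ⟨h, _⟩ | ⟨_, h⟩
    · exact hα h
    · linarith
  calc T.belowSum q μ α + μ (T.tentB α) ^ (q - 1)
      ≤ T.belowSum q μ α + (1 - T.belowSum q μ α) := add_le_add_right h2 _
    _ = 1 := add_tsub_cancel_of_le hb

end RTree

/-- If the co-potential `M(α) = μ(∂T_α)` of a finite positive Borel measure `μ`
on `∂T` satisfies `M(α)(1 − I(M^{p′−1})(b(α))) = Σ_{β≥α} M(β)^{p′}` for all
edges `α`, then `I(M^{p′−1})(ζ) = 1` for `μ`-almost every `ζ ∈ ∂T`. -/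
theorem stmt15 (T : RTree) (p q : ℝ) (hp : 1 < p) (hpq : 1 / p + 1 / q = 1)
    (μ : @Measure T.Boundary T.tborel) (hfin : @IsFiniteMeasure _ _ μ)
    (heq : ∀ α : T.E, μ (T.tentB α) * (1 - T.belowSum q μ α) =
      ∑' β : T.E, Set.indicator (T.tentE α) (fun γ => μ (T.tentB γ) ^ q) β) :
    μ {ζ : T.Boundary |
        T.relPot T.root (fun β => μ (T.tentB β) ^ (q - 1)) ζ ≠ 1} = 0 := by
  letI : MeasurableSpace T.Boundary := T.tborel
  haveI := hfin
  have hp0 : 0 < p := lt_trans one_pos hp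
  have hip : 0 < 1 / p := by positivity
  have hip1 : 1 / p < 1 := by rw [div_lt_one hp0]; exact hp
  have hq0 : 0 < q := by
    have h1 : 0 < 1 / q := by linarith
    exact (one_div_pos).mp h1
  have hq : 1 < q := by
    have h1 : 1 / q < 1 := by linarith
    exact (div_lt_one hq0).mp h1
  -- the set of reachable edges
  set R : Set T.E := T.tentE T.root with hR
  haveI : Countable R := (RTree.aux_reach_countable T).to_subtype
  set F : R → T.Boundary → ℝ≥0∞ :=
    fun β ζ => (T.tentB β).indicator (fun _ => μ (T.tentB β) ^ (q - 1)) ζ with hF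
  -- the potential as a sum over n
  have hrel : ∀ ζ : T.Boundary,
      T.relPot T.root (fun β => μ (T.tentB β) ^ (q - 1)) ζ =
        ∑' n, μ (T.tentB (ζ.seq n)) ^ (q - 1) := by
    intro ζ
    apply tsum_congr
    intro n
    exact Set.indicator_of_mem (RTree.aux_root_le_seq ζ n) _
  -- the potential as a sum over reachable edges
  have hgh : ∀ ζ : T.Boundary,
      T.relPot T.root (fun β => μ (T.tentB β) ^ (q - 1)) ζ = ∑' (β : R), F β ζ := by
    intro ζ
    rw [hrel ζ]
    have hmem : ∀ n, ζ.seq n ∈ R := fun n => RTree.aux_root_le_seq ζ n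
    have hinj : Function.Injective (fun n => (⟨ζ.seq n, hmem n⟩ : R)) :=
      fun m n h => RTree.aux_seq_inj ζ (congrArg Subtype.val h)
    have hsupp : Function.support (fun β : R => F β ζ) ⊆
        Set.range (fun n => (⟨ζ.seq n, hmem n⟩ : R)) := by
      intro β hβ
      have hζβ : ζ ∈ T.tentB (β : T.E) := by
        by_contra hc
        exact hβ (by simp [hF, Set.indicator_of_notMem hc])
      rcases hζβ with ⟨n, hn⟩
      exact ⟨n, Subtype.ext hn⟩
    rw [← hinj.tsum_eq hsupp]
    apply tsum_congr
    intro n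
    simp only [hF]
    exact (Set.indicator_of_mem (show ζ ∈ T.tentB (ζ.seq n) from ⟨n, rfl⟩)
      (fun _ => μ (T.tentB (ζ.seq n)) ^ (q - 1))).symm
  -- measurability
  have hFm : ∀ β : R, Measurable (F β) := fun β =>
    Measurable.indicator measurable_const (RTree.aux_tentB_measurableSet (β : T.E))
  have hhm : Measurable (fun ζ => ∑' (β : R), F β ζ) := Measurable.ennreal_tsum hFm
  -- x ^ (q-1) * x = x ^ q
  have hpow : ∀ x : ℝ≥0∞, x ≠ ⊤ → x ^ (q - 1) * x = x ^ q := by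
    intro x hx
    rcases eq_or_ne x 0 with rfl | h0
    · rw [mul_zero, ENNReal.zero_rpow_of_pos (by linarith)]
    · have h : x ^ (q - 1) * x ^ (1 : ℝ) = x ^ (q - 1 + 1) :=
        (ENNReal.rpow_add (q - 1) 1 h0 hx).symm
      rw [ENNReal.rpow_one] at h
      rw [h]
      congr 1
      ring
  -- the integral of the potential
  have hint : ∫⁻ ζ, (∑' (β : R), F β ζ) ∂μ = μ Set.univ := by
    rw [MeasureTheory.lintegral_tsum (fun β => (hFm β).aemeasurable)]
    have hterm : ∀ β : R, ∫⁻ ζ, F β ζ ∂μ = μ (T.tentB (β : T.E)) ^ q := by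
      intro β
      rw [hF]
      rw [MeasureTheory.lintegral_indicator (RTree.aux_tentB_measurableSet (β : T.E)),
        MeasureTheory.setLIntegral_const]
      exact hpow _ (measure_ne_top μ _)
    rw [tsum_congr hterm]
    have h2 := heq T.root
    rw [RTree.aux_belowSum_root, tsub_zero, RTree.aux_tentB_root, mul_one,
      ← tsum_subtype (T.tentE T.root) (fun γ => μ (T.tentB γ) ^ q)] at h2
    exact h2.symm
  -- null set of edges with zero measure
  set N : Set T.Boundary := {ζ | ∃ n, μ (T.tentB (ζ.seq n)) = 0} with hN
  have hNnull : μ N = 0 := by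
    have hZc : {β : T.E | T.Le T.root β ∧ μ (T.tentB β) = 0}.Countable :=
      (RTree.aux_reach_countable T).mono (fun β hβ => hβ.1)
    haveI := hZc.to_subtype
    have hsub : N ⊆ ⋃ (β : {β : T.E | T.Le T.root β ∧ μ (T.tentB β) = 0}),
        T.tentB (β : T.E) := by
      rintro ζ ⟨n, hn⟩
      exact Set.mem_iUnion.mpr ⟨⟨ζ.seq n, RTree.aux_root_le_seq ζ n, hn⟩, ⟨n, rfl⟩⟩
    exact measure_mono_null hsub (measure_iUnion_null fun β => β.2.2)
  -- the potential is at most 1 off N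
  have hbound : ∀ ζ ∉ N, (∑' n, μ (T.tentB (ζ.seq n)) ^ (q - 1)) ≤ 1 := by
    intro ζ hζ
    rw [ENNReal.tsum_eq_iSup_sum]
    apply iSup_le
    intro s
    have hsub : s ⊆ Finset.range (s.sup id + 1) := fun k hk =>
      Finset.mem_range.mpr (Nat.lt_succ_of_le (Finset.le_sup (f := id) hk))
    calc ∑ k ∈ s, μ (T.tentB (ζ.seq k)) ^ (q - 1)
        ≤ ∑ k ∈ Finset.range (s.sup id + 1), μ (T.tentB (ζ.seq k)) ^ (q - 1) :=
          Finset.sum_le_sum_of_subset hsub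
      _ = T.belowSum q μ (ζ.seq (s.sup id + 1)) :=
          (RTree.aux_belowSum_seq T q μ ζ (s.sup id)).symm
      _ ≤ T.belowSum q μ (ζ.seq (s.sup id + 1)) +
            μ (T.tentB (ζ.seq (s.sup id + 1))) ^ (q - 1) := le_self_add
      _ ≤ 1 := RTree.aux_key T q hq μ hfin heq _
          (fun h0 => hζ ⟨s.sup id + 1, h0⟩)
  have hle : ∀ᵐ ζ ∂μ, (∑' (β : R), F β ζ) ≤ 1 := by
    rw [MeasureTheory.ae_iff]
    refine measure_mono_null (fun ζ hζ => ?_) hNnull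
    simp only [Set.mem_setOf_eq, not_le] at hζ
    by_contra hζN
    have hb := hbound ζ hζN
    rw [← hrel ζ, hgh ζ] at hb
    exact absurd hb (not_le.mpr hζ)
  have hsubint : ∫⁻ ζ, ((1 : ℝ≥0∞) - ∑' (β : R), F β ζ) ∂μ = 0 := by
    have h := MeasureTheory.lintegral_sub (f := fun _ => (1 : ℝ≥0∞))
      (g := fun ζ => ∑' (β : R), F β ζ) hhm (by rw [hint]; exact measure_ne_top μ _) hle
    rw [h, hint, MeasureTheory.lintegral_one, tsub_self]
  have hae0 : ∀ᵐ ζ ∂μ, (1 : ℝ≥0∞) - (∑' (β : R), F β ζ) = 0 := by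
    have h := (MeasureTheory.lintegral_eq_zero_iff
      (measurable_const.sub hhm)).mp hsubint
    filter_upwards [h] with ζ hζ using hζ
  have hone : ∀ᵐ ζ ∂μ,
      T.relPot T.root (fun β => μ (T.tentB β) ^ (q - 1)) ζ = 1 := by
    filter_upwards [hae0, hle] with ζ h1 h2
    rw [hgh ζ]
    exact le_antisymm h2 (tsub_eq_zero_iff_le.mp h1)
  rw [MeasureTheory.ae_iff] at hone
  exact hone
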